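/- With H = ⟨h₁, h₂⟩, N = ⟨(h₁h₂)^r⟩ = ⟨αI_{2t}⟩, and T = ⟨h₁⟩⟨h₂^{q^k−1}⟩ as above, one has N ∩ T = {I_{2t}} and H = NT. -/

import Mathlib

section Aux

variable {M : Type*} [Monoid M]

lemma aux_conj_pow (P Q d : M) (hPQ : P * Q = 1) (hQP : Q * P = 1) (n : ℕ) :
    (P * d * Q) ^ n = P * d ^ n * Q := by
  induction n with
  | zero => simp [hPQ]
  | succ n ih =>
      rw [pow_succ, ih, pow_succ]
      calc P * d ^ n * Q * (P * d * Q) = P * d ^ n * (Q * P) * d * Q := by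
            simp [mul_assoc]
        _ = P * (d ^ n * d) * Q := by rw [hQP]; simp [mul_assoc]

lemma aux_mem_closure_pair {x y : M} (h : Commute x y) {g : M}
    (hg : g ∈ Submonoid.closure {x, y}) : ∃ a b : ℕ, g = x ^ a * y ^ b := by
  induction hg using Submonoid.closure_induction with
  | mem z hz =>
      rcases hz with hz | hz
      · exact ⟨1, 0, by simp [hz]⟩
      · exact ⟨0, 1, by simp [Set.mem_singleton_iff.mp hz]⟩
  | one => exact ⟨0, 0, by simp⟩
  | mul z w _ _ hz hw =>
      obtain ⟨a, b, rfl⟩ := hz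
      obtain ⟨c, d, rfl⟩ := hw
      refine ⟨a + c, b + d, ?_⟩
      rw [pow_add, pow_add]
      calc x ^ a * y ^ b * (x ^ c * y ^ d)
          = x ^ a * (y ^ b * x ^ c) * y ^ d := by simp [mul_assoc]
        _ = x ^ a * (x ^ c * y ^ b) * y ^ d := by rw [(h.symm.pow_pow b c).eq]
        _ = x ^ a * x ^ c * (y ^ b * y ^ d) := by simp [mul_assoc]

lemma aux_mix {x y : M} (h : Commute x y) (a c d : ℕ) :
    (x * y) ^ a * (x ^ c * y ^ d) = x ^ (a + c) * y ^ (a + d) := by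
  rw [h.mul_pow]
  calc x ^ a * y ^ a * (x ^ c * y ^ d)
      = x ^ a * (y ^ a * x ^ c) * y ^ d := by simp [mul_assoc]
    _ = x ^ a * (x ^ c * y ^ a) * y ^ d := by rw [(h.symm.pow_pow a c).eq]
    _ = x ^ (a + c) * y ^ (a + d) := by rw [pow_add, pow_add]; simp [mul_assoc]

lemma aux_blockdiag_pow {n m R : Type*} [Fintype n] [Fintype m] [DecidableEq n] [DecidableEq m]
    [CommRing R] (A : Matrix n n R) (B : Matrix m m R) (a : ℕ) :
    (Matrix.fromBlocks A 0 0 B) ^ a = Matrix.fromBlocks (A ^ a) 0 0 (B ^ a) := by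
  induction a with
  | zero => simp [Matrix.fromBlocks_one]
  | succ a ih => rw [pow_succ, ih, Matrix.fromBlocks_multiply]; simp [pow_succ]

end Aux

theorem H_eq_N_mul_T (q k t r : ℕ) (hq : 2 ≤ q) (hk : 1 ≤ k) (ht : 1 ≤ t)
    (hr : r = (q ^ (k * t) - 1) / (q ^ k - 1))
    (hcop : Nat.Coprime r (q ^ k - 1)) (hrr : r * (q ^ k - 1) = q ^ (k * t) - 1)
    (F : Type*) [Field F] [Fintype F] (hF : Fintype.card F = q ^ k)
    (α : F) (hα : orderOf α = q ^ k - 1)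
    (C : Matrix (Fin t) (Fin t) F) (hC : orderOf C = r)
    (hfield : ∀ A ∈ Algebra.adjoin F {C}, A = 0 ∨ IsUnit A)
    (h₁ h₂ : Matrix (Fin t ⊕ Fin t) (Fin t ⊕ Fin t) F)
    (hh₁ : h₁ = Matrix.fromBlocks C 1 0 (α • 1))
    (hh₂ : h₂ = Matrix.fromBlocks (α • 1) (-1) 0 C)
    (N T : Submonoid (Matrix (Fin t ⊕ Fin t) (Fin t ⊕ Fin t) F))
    (hN : N = Submonoid.powers ((h₁ * h₂) ^ r))
    (hT : T = Submonoid.closure {h₁, h₂ ^ (q ^ k - 1)}) :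
    (N ⊓ T = ⊥) ∧
    (∀ g ∈ Submonoid.closure {h₁, h₂}, ∃ n ∈ N, ∃ t ∈ T, g = n * t) := by
  clear hr
  -- notation
  set nn : ℕ := q ^ k - 1 with hnn
  -- basic positivity
  have hkt : 1 ≤ k * t := Nat.one_le_iff_ne_zero.mpr (by positivity)
  have hpow2 : 2 ≤ q ^ (k * t) := by
    calc 2 ≤ q := hq
    _ = q ^ 1 := (pow_one q).symm
    _ ≤ q ^ (k * t) := Nat.pow_le_pow_right (by omega) hkt
  have hprod : 1 ≤ r * nn := by rw [hrr]; omega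
  have hrpos : 0 < r := by
    rcases Nat.eq_zero_or_pos r with h | h
    · rw [h, zero_mul] at hprod; omega
    · exact h
  have hnpos : 0 < nn := by
    rcases Nat.eq_zero_or_pos nn with h | h
    · rw [h, mul_zero] at hprod; omega
    · exact h
  -- power identities
  have hC1 : C ^ r = 1 := by rw [← hC]; exact pow_orderOf_eq_one C
  have hα1 : α ^ nn = 1 := by rw [← hα]; exact pow_orderOf_eq_one α
  -- index for scalar extraction
  have i0 : Fin t := ⟨0, ht⟩
  have hscal_inj : ∀ c c' : F, c • (1 : Matrix (Fin t ⊕ Fin t) (Fin t ⊕ Fin t) F) = c' • 1 →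
      c = c' := by
    intro c c' hcc
    have := congrFun (congrFun hcc (Sum.inl i0)) (Sum.inl i0)
    simpa [Matrix.one_apply] using this
  have hscal_inj' : ∀ c c' : F, c • (1 : Matrix (Fin t) (Fin t) F) = c' • 1 → c = c' := by
    intro c c' hcc
    have := congrFun (congrFun hcc i0) i0
    simpa [Matrix.one_apply] using this
  -- h₁ * h₂ computation and commutation
  have hmul : h₁ * h₂ = α • Matrix.fromBlocks C 0 0 C := by
    rw [hh₁, hh₂]
    simp [Matrix.fromBlocks_multiply, Matrix.fromBlocks_smul, mul_smul_comm, smul_mul_assoc]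
  have hcomm : Commute h₁ h₂ := by
    unfold Commute SemiconjBy
    rw [hh₁, hh₂]
    simp [Matrix.fromBlocks_multiply, mul_smul_comm, smul_mul_assoc]
  have hNpow : (h₁ * h₂) ^ r = (α ^ r) • (1 : Matrix (Fin t ⊕ Fin t) (Fin t ⊕ Fin t) F) := by
    rw [hmul, smul_pow, aux_blockdiag_pow, hC1, Matrix.fromBlocks_one]
  -- elements of N are scalars
  have hscal : ∀ x ∈ N, ∃ c : F, x = c • (1 : Matrix (Fin t ⊕ Fin t) (Fin t ⊕ Fin t) F) := by
    intro x hx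
    rw [hN] at hx
    obtain ⟨mz, hmz⟩ := (Submonoid.mem_powers_iff _ _).mp hx
    exact ⟨(α ^ r) ^ mz, by rw [← hmz, hNpow, smul_pow, one_pow]⟩
  -- units
  have hUC : IsUnit C := by
    refine isUnit_iff_exists.mpr ⟨C ^ (r - 1), ?_, ?_⟩
    · rw [← pow_succ', Nat.sub_add_cancel hrpos, hC1]
    · rw [← pow_succ, Nat.sub_add_cancel hrpos, hC1]
  have hUα : IsUnit α := IsUnit.of_mul_eq_one (a := α) (α ^ (nn - 1)) (by
    rw [← pow_succ', Nat.sub_add_cancel hnpos, hα1])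
  have hUsmul : IsUnit (Matrix.det (α • 1 : Matrix (Fin t) (Fin t) F)) := by
    rw [Matrix.det_smul, Matrix.det_one, mul_one]; exact hUα.pow _
  have hu1 : IsUnit h₁ := by
    rw [Matrix.isUnit_iff_isUnit_det, hh₁, Matrix.det_fromBlocks_zero₂₁]
    exact ((Matrix.isUnit_iff_isUnit_det C).mp hUC).mul hUsmul
  have hu2 : IsUnit h₂ := by
    rw [Matrix.isUnit_iff_isUnit_det, hh₂, Matrix.det_fromBlocks_zero₂₁]
    exact hUsmul.mul ((Matrix.isUnit_iff_isUnit_det C).mp hUC)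
  have horder : ∀ x : Matrix (Fin t ⊕ Fin t) (Fin t ⊕ Fin t) F, IsUnit x → 0 < orderOf x := by
    intro x hx
    obtain ⟨u, rfl⟩ := hx
    rw [orderOf_units]
    exact orderOf_pos u
  have he₁pos : 0 < orderOf h₁ := horder h₁ hu1
  have he₂pos : 0 < orderOf h₂ := horder h₂ hu2
  have he₁ : h₁ ^ orderOf h₁ = 1 := pow_orderOf_eq_one h₁
  have he₂ : h₂ ^ orderOf h₂ = 1 := pow_orderOf_eq_one h₂
  -- arithmetic: find m, s with r * m = 1 + nn * s
  have htot : 0 < Nat.totient nn := Nat.totient_pos.mpr hnpos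
  set m : ℕ := r ^ (Nat.totient nn - 1) with hm
  have hrm' : r * m = r ^ Nat.totient nn := by
    rw [hm, ← pow_succ', Nat.sub_add_cancel htot]
  have hmodeq : r ^ Nat.totient nn ≡ 1 [MOD nn] := Nat.ModEq.pow_totient hcop
  have h1le : 1 ≤ r * m := by
    have h1m : 1 ≤ m := Nat.one_le_pow _ _ hrpos
    nlinarith
  have hdvd : nn ∣ r * m - 1 := by
    refine (Nat.modEq_iff_dvd' h1le).mp ?_
    rw [hrm']
    exact hmodeq.symm
  obtain ⟨s, hs⟩ := hdvd
  have hrm : r * m = 1 + nn * s := by omega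
  -- membership of generators in T
  have hTmem₁ : h₁ ∈ T := by
    rw [hT]; exact Submonoid.subset_closure (by simp)
  have hTmem₂ : h₂ ^ nn ∈ T := by
    rw [hT]; exact Submonoid.subset_closure (by simp)
  -- key decomposition of h₂
  set d₁' : ℕ := orderOf h₁ - 1 with hd₁'
  set d₂' : ℕ := orderOf h₂ - 1 with hd₂'
  have he₁' : orderOf h₁ = d₁' + 1 := by omega
  have he₂' : orderOf h₂ = d₂' + 1 := by omega
  have hkey : ((h₁ * h₂) ^ r) ^ m * (h₁ ^ (r * m * d₁') * (h₂ ^ nn) ^ (s * d₂')) = h₂ := by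
    rw [← pow_mul, ← pow_mul, aux_mix hcomm]
    have e1 : r * m + r * m * d₁' = (d₁' + 1) * (r * m) := by ring
    have e2 : r * m + nn * (s * d₂') = 1 + (d₂' + 1) * (nn * s) := by rw [hrm]; ring
    rw [e1, e2, pow_mul, ← he₁', he₁, one_pow, one_mul, pow_add, pow_mul, ← he₂', he₂,
      one_pow, mul_one, pow_one]
  have hNmem : ((h₁ * h₂) ^ r) ^ m ∈ N := by
    rw [hN]; exact ⟨m, rfl⟩
  have hTmemt : h₁ ^ (r * m * d₁') * (h₂ ^ nn) ^ (s * d₂') ∈ T :=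
    mul_mem (pow_mem hTmem₁ _) (pow_mem hTmem₂ _)
  constructor
  · -- N ⊓ T = ⊥
    refine le_antisymm ?_ bot_le
    rintro x ⟨hxN, hxT⟩
    rw [Submonoid.mem_bot]
    rw [hN] at hxN
    obtain ⟨mx, hmx⟩ := (Submonoid.mem_powers_iff _ _).mp hxN
    have hxval : x = α ^ (r * mx) • 1 := by
      rw [← hmx, hNpow, smul_pow, one_pow, ← pow_mul]
    obtain ⟨a, l, hxab⟩ := aux_mem_closure_pair (hcomm.pow_right nn) (hT ▸ hxT)
    have hmemsub : (α • (1 : Matrix (Fin t) (Fin t) F)) - C ∈ Algebra.adjoin F {C} := by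
      refine sub_mem ?_ (Algebra.self_mem_adjoin_singleton F C)
      have halg : (α • (1 : Matrix (Fin t) (Fin t) F)) = algebraMap F _ α := by
        rw [Algebra.algebraMap_eq_smul_one]
      rw [halg]
      exact Subalgebra.algebraMap_mem _ α
    rcases hfield _ hmemsub with hdeg | hU
    · -- degenerate: C = α • 1, forces r = 1 and α = 1
      have hCα : C = α • 1 := (sub_eq_zero.mp hdeg).symm
      have hCnn : C ^ nn = 1 := by
        rw [hCα, smul_pow, one_pow, hα1, one_smul]
      have hrdvd : r ∣ nn := hC ▸ orderOf_dvd_of_pow_eq_one hCnn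
      have hr1 : r = 1 := Nat.Coprime.eq_one_of_dvd hcop hrdvd
      have hCone : C = 1 := orderOf_eq_one_iff.mp (hC.trans hr1)
      have hαone : α = 1 := by
        refine hscal_inj' α 1 ?_
        rw [one_smul, ← hCα, hCone]
      rw [hxval, hαone, one_pow, one_smul]
    · -- nondegenerate: conjugate to block-diagonal form
      obtain ⟨V, hV⟩ := hU
      set W : Matrix (Fin t) (Fin t) F := ↑V⁻¹ with hW
      have hW1 : (α • 1 - C) * W = 1 := by
        rw [← hV, hW]; exact_mod_cast V.mul_inv
      have hW2 : W * (α • 1 - C) = 1 := by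
        rw [← hV, hW]; exact_mod_cast V.inv_mul
      have hW1' : α • W - C * W = 1 := by
        rw [← hW1, sub_mul, smul_mul_assoc, one_mul]
      have hW2' : α • W - W * C = 1 := by
        rw [← hW2, mul_sub, mul_smul_comm, mul_one]
      set P : Matrix (Fin t ⊕ Fin t) (Fin t ⊕ Fin t) F :=
        Matrix.fromBlocks 1 W 0 1 with hP
      set Q : Matrix (Fin t ⊕ Fin t) (Fin t ⊕ Fin t) F :=
        Matrix.fromBlocks 1 (-W) 0 1 with hQ
      have hPQ : P * Q = 1 := by
        rw [hP, hQ, Matrix.fromBlocks_multiply]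
        simp [Matrix.fromBlocks_one]
      have hQP : Q * P = 1 := by
        rw [hP, hQ, Matrix.fromBlocks_multiply]
        simp [Matrix.fromBlocks_one]
      set D1 : Matrix (Fin t ⊕ Fin t) (Fin t ⊕ Fin t) F :=
        Matrix.fromBlocks C 0 0 (α • 1) with hD1
      set D2 : Matrix (Fin t ⊕ Fin t) (Fin t ⊕ Fin t) F :=
        Matrix.fromBlocks (α • 1) 0 0 C with hD2
      have hconj₁ : h₁ = P * D1 * Q := by
        have hh : h₁ * P = P * D1 := by
          rw [hh₁, hP, hD1, Matrix.fromBlocks_multiply, Matrix.fromBlocks_multiply]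
          refine Matrix.fromBlocks_inj.mpr ⟨by simp, ?_, by simp, by simp⟩
          -- C * W + 1 * 1 = 1 * 0 + W * (α • 1)
          rw [mul_one, one_mul, zero_add, mul_smul_comm, mul_one, ← hW1']
          abel
        calc h₁ = h₁ * (P * Q) := by rw [hPQ, mul_one]
          _ = (h₁ * P) * Q := by rw [mul_assoc]
          _ = P * D1 * Q := by rw [hh]
      have hconj₂ : h₂ = P * D2 * Q := by
        have hh : h₂ * P = P * D2 := by
          rw [hh₂, hP, hD2, Matrix.fromBlocks_multiply, Matrix.fromBlocks_multiply]
          refine Matrix.fromBlocks_inj.mpr ⟨by simp, ?_, by simp, by simp⟩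
          -- (α•1) * W + (-1) * 1 = 1 * 0 + W * C
          simp only [smul_mul_assoc, one_mul, mul_one, mul_zero, zero_add]
          rw [← hW2']
          abel
        calc h₂ = h₂ * (P * Q) := by rw [hPQ, mul_one]
          _ = (h₂ * P) * Q := by rw [mul_assoc]
          _ = P * D2 * Q := by rw [hh]
      have hxconj : x = P * (D1 ^ a * D2 ^ (nn * l)) * Q := by
        rw [hxab, ← pow_mul, hconj₁, hconj₂,
          aux_conj_pow P Q D1 hPQ hQP a, aux_conj_pow P Q D2 hPQ hQP (nn * l)]
        calc P * D1 ^ a * Q * (P * D2 ^ (nn * l) * Q)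
            = P * D1 ^ a * (Q * P) * D2 ^ (nn * l) * Q := by simp [mul_assoc]
          _ = P * (D1 ^ a * D2 ^ (nn * l)) * Q := by rw [hQP]; simp [mul_assoc]
      have hDval : D1 ^ a * D2 ^ (nn * l) = α ^ (r * mx) • 1 := by
        have h1 : P * (D1 ^ a * D2 ^ (nn * l)) * Q = α ^ (r * mx) • 1 :=
          hxconj.symm.trans hxval
        calc D1 ^ a * D2 ^ (nn * l)
            = (Q * P) * (D1 ^ a * D2 ^ (nn * l)) * (Q * P) := by rw [hQP]; simp
          _ = Q * (P * (D1 ^ a * D2 ^ (nn * l)) * Q) * P := by simp [mul_assoc]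
          _ = Q * (α ^ (r * mx) • 1) * P := by rw [h1]
          _ = α ^ (r * mx) • (Q * P) := by
              rw [mul_smul_comm, smul_mul_assoc, mul_one]
          _ = α ^ (r * mx) • 1 := by rw [hQP]
      rw [hD1, hD2, aux_blockdiag_pow, aux_blockdiag_pow, Matrix.fromBlocks_multiply]
        at hDval
      have hsm : (α ^ (r * mx)) • (1 : Matrix (Fin t ⊕ Fin t) (Fin t ⊕ Fin t) F) =
          Matrix.fromBlocks (α ^ (r * mx) • 1) 0 0 (α ^ (r * mx) • 1) := by
        rw [← Matrix.fromBlocks_one, Matrix.fromBlocks_smul]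
        simp
      rw [hsm] at hDval
      obtain ⟨h11, -, -, -⟩ := Matrix.fromBlocks_inj.mp hDval
      -- h11 : C ^ a * (α • 1) ^ (nn * l) + 0 * 0 = α ^ (r * mx) • 1
      rw [mul_zero, add_zero, smul_pow, one_pow, mul_smul_comm, mul_one] at h11
      -- h11 : α ^ (nn * l) • C ^ a = α ^ (r * mx) • 1
      have hb : α ^ (nn * l) = 1 := by rw [pow_mul, hα1, one_pow]
      rw [hb, one_smul] at h11
      -- h11 : C ^ a = α ^ (r * mx) • 1
      have hCann : C ^ (a * nn) = 1 := by
        rw [pow_mul, h11, smul_pow, one_pow, ← pow_mul, mul_comm (r * mx) nn, pow_mul,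
          hα1, one_pow, one_smul]
      have hra : r ∣ a * nn := hC ▸ orderOf_dvd_of_pow_eq_one hCann
      have hra' : r ∣ a := Nat.Coprime.dvd_of_dvd_mul_right hcop hra
      have hCa : C ^ a = 1 := by
        obtain ⟨j, rfl⟩ := hra'
        rw [pow_mul, hC1, one_pow]
      rw [hCa] at h11
      have hfin : (1 : F) = α ^ (r * mx) := by
        refine hscal_inj' 1 (α ^ (r * mx)) ?_
        rw [one_smul]
        exact h11
      rw [hxval, ← hfin, one_smul]
  · -- H = N * T
    intro g hg
    induction hg using Submonoid.closure_induction with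
    | mem z hz =>
        rcases hz with hz | hz
        · exact ⟨1, one_mem N, z, hz ▸ hTmem₁, (one_mul z).symm⟩
        · rw [Set.mem_singleton_iff.mp hz]
          exact ⟨((h₁ * h₂) ^ r) ^ m, hNmem, _, hTmemt, hkey.symm⟩
    | one => exact ⟨1, one_mem N, 1, one_mem T, (one_mul 1).symm⟩
    | mul z w _ _ hz hw =>
        obtain ⟨n₁, hn₁, t₁, ht₁, rfl⟩ := hz
        obtain ⟨n₂, hn₂, t₂, ht₂, rfl⟩ := hw
        refine ⟨n₁ * n₂, mul_mem hn₁ hn₂, t₁ * t₂, mul_mem ht₁ ht₂, ?_⟩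
        obtain ⟨c, rfl⟩ := hscal n₂ hn₂
        calc n₁ * t₁ * (c • 1 * t₂) = n₁ * (t₁ * (c • 1)) * t₂ := by
              simp [mul_assoc]
          _ = n₁ * (c • 1 * t₁) * t₂ := by
              rw [smul_mul_assoc, mul_smul_comm, one_mul, mul_one]
          _ = n₁ * (c • 1) * (t₁ * t₂) := by simp [mul_assoc]
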